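/- For every prime p with 5 ≤ p < 60184, the next prime q after p satisfies q - p < p/(log p - 1.1). -/

import Mathlib

open Real

def P : ℕ := 256041159035492609053110100510385311995538591998443060216114576417920917800321526504084465112487730

def isPrimeG (n : ℕ) : Bool := Nat.gcd n P == 1

def noDivO (n : ℕ) : ℕ → ℕ → Bool
  | _, 0 => true
  | d, fuel+1 => (n < d * d : Bool) || (((n % d != 0)) && noDivO n (d+2) fuel)

def isPrimeO (n : ℕ) : Bool := noDivO n 3 123

def nextIn (f : ℕ → Bool) : ℕ → ℕ → Bool
  | _, 0 => false
  | n, j+1 => f (n+2) || nextIn f (n+2) j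

def check (f : ℕ → Bool) : ℕ → ℕ → ℕ → Bool
  | _, 0, _ => true
  | n, l+1, g => (!(f n) || nextIn f n g) && check f (n+2) l g

set_option maxRecDepth 100000 in
lemma P_eq : P = ([2, 3, 5, 7, 11, 13, 17, 19, 23, 29, 31, 37, 41, 43, 47, 53, 59, 61, 67, 71, 73, 79, 83, 89, 97, 101, 103, 107, 109, 113, 127, 131, 137, 139, 149, 151, 157, 163, 167, 173, 179, 181, 191, 193, 197, 199, 211, 223, 227, 229, 233, 239, 241] : List ℕ).prod := by
  simp only [List.prod_cons, List.prod_nil]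
  norm_num [P]

lemma mem_le (a : ℕ) (ha : a ∈ ([2, 3, 5, 7, 11, 13, 17, 19, 23, 29, 31, 37, 41, 43, 47, 53, 59, 61, 67, 71, 73, 79, 83, 89, 97, 101, 103, 107, 109, 113, 127, 131, 137, 139, 149, 151, 157, 163, 167, 173, 179, 181, 191, 193, 197, 199, 211, 223, 227, 229, 233, 239, 241] : List ℕ)) : 0 < a ∧ a ≤ 241 := by
  fin_cases ha <;> norm_num

set_option maxRecDepth 10000 in
lemma primes_dvd_P : ∀ m, m < 251 → m.Prime → m ∣ P := by
  letI : DecidablePred Nat.Prime := fun n => Nat.decidablePrime n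
  decide

lemma isPrimeG_iff (m : ℕ) (h1 : 241 < m) (h2 : m < 63001) : isPrimeG m = true ↔ m.Prime := by
  rw [isPrimeG, beq_iff_eq]
  constructor
  · intro h
    by_contra hnp
    have hm1 : m ≠ 1 := by omega
    have hd := Nat.minFac_dvd m
    have hdp := Nat.minFac_prime hm1
    have hsq := Nat.minFac_sq_le_self (by omega) hnp
    have hle : m.minFac < 251 := by nlinarith [sq_nonneg (m.minFac - 251)]
    have hdP : m.minFac ∣ P := primes_dvd_P _ hle hdp
    have : m.minFac ∣ Nat.gcd m P := Nat.dvd_gcd hd hdP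
    rw [h] at this
    have := Nat.eq_one_of_dvd_one this
    exact (Nat.Prime.one_lt hdp).ne' this
  · intro hp
    have : ¬ m ∣ P := by
      rw [P_eq]
      intro hdvd
      obtain ⟨a, haL, hma⟩ := (Nat.Prime.prime hp).dvd_prod_iff.mp hdvd
      obtain ⟨ha0, ha241⟩ := mem_le a haL
      have := Nat.le_of_dvd ha0 hma
      omega
    exact (Nat.Prime.coprime_iff_not_dvd hp).mpr this

lemma noDivO_sound (fuel : ℕ) : ∀ d n, 1 ≤ d → noDivO n d fuel = true →
    ∀ i, i < fuel → (d + 2*i) * (d + 2*i) ≤ n → ¬ (d + 2*i) ∣ n := by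
  induction fuel with
  | zero => intro d n _ _ i hi; omega
  | succ fuel ih =>
    intro d n hd1 h i hi hsq hdvd
    rw [noDivO, Bool.or_eq_true, Bool.and_eq_true] at h
    rcases h with h | ⟨h1, h2⟩
    · simp only [decide_eq_true_eq] at h
      nlinarith
    · rcases i with _ | i
      · simp only [Nat.mul_zero, Nat.add_zero] at hsq hdvd
        rw [bne_iff_ne, ne_eq] at h1
        exact h1 (Nat.mod_eq_zero_of_dvd hdvd)
      · exact ih (d+2) n (by omega) h2 i (by omega) (by ring_nf; ring_nf at hsq; omega) (by
          have : d + 2 + 2*i = d + 2*(i+1) := by ring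
          rw [this]; exact hdvd)

lemma noDivO_complete (fuel : ℕ) : ∀ d n, 2 ≤ d → n.Prime → noDivO n d fuel = true := by
  induction fuel with
  | zero => intro d n _ _; rfl
  | succ fuel ih =>
    intro d n hd hp
    rw [noDivO, Bool.or_eq_true, Bool.and_eq_true]
    by_cases hlt : n < d * d
    · left; simpa using hlt
    · right
      refine ⟨?_, ih (d+2) n (by omega) hp⟩
      rw [bne_iff_ne, ne_eq]
      intro hmod
      have hdvd : d ∣ n := Nat.dvd_of_mod_eq_zero hmod
      rcases (Nat.Prime.eq_one_or_self_of_dvd hp d hdvd) with h | h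
      · omega
      · subst h
        have := hp.two_le
        nlinarith

lemma isPrimeO_iff (m : ℕ) (hodd : Odd m) (h3 : 3 ≤ m) (h2 : m < 61504) :
    isPrimeO m = true ↔ m.Prime := by
  constructor
  · intro h
    by_contra hnp
    have hm1 : m ≠ 1 := by omega
    have hd := Nat.minFac_dvd m
    have hdp := Nat.minFac_prime hm1
    have hsq := Nat.minFac_sq_le_self (by omega) hnp
    rw [pow_two] at hsq
    have hodd' : Odd (m.minFac) := by
      rcases Nat.Prime.eq_two_or_odd' hdp with h2' | h
      · exfalso
        rw [Nat.odd_iff] at hodd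
        have : 2 ∣ m := h2' ▸ hd
        omega
      · exact h
    have h3' : 3 ≤ m.minFac := by
      obtain ⟨t, ht⟩ := hodd'
      have := hdp.two_le
      omega
    obtain ⟨j, hj⟩ := hodd'
    have hj1 : 1 ≤ j := by omega
    have hq2 : (2*j+1)*(2*j+1) < 61504 := by rw [← hj]; omega
    have hjle : j ≤ 123 := by nlinarith
    have heq : 3 + 2*(j-1) = m.minFac := by omega
    have hns := noDivO_sound 123 3 m (by omega) h (j-1) (by omega) (by rw [heq]; exact hsq)
    rw [heq] at hns
    exact hns hd
  · intro hp
    exact noDivO_complete 123 3 m (by omega) hp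

lemma nextIn_spec (f : ℕ → Bool) : ∀ j n, nextIn f n j = true →
    ∃ i, i < j ∧ f (n + 2*(i+1)) = true := by
  intro j
  induction j with
  | zero => intro n h; cases h
  | succ j ih =>
    intro n h
    rw [nextIn, Bool.or_eq_true] at h
    rcases h with h | h
    · exact ⟨0, by omega, by simpa using h⟩
    · obtain ⟨i, hi, hf⟩ := ih (n+2) h
      exact ⟨i+1, by omega, by convert hf using 2; ring⟩

lemma check_spec (f : ℕ → Bool) : ∀ l n g, check f n l g = true →
    ∀ i, i < l → f (n + 2*i) = true → nextIn f (n + 2*i) g = true := by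
  intro l
  induction l with
  | zero => intro n g _ i hi; omega
  | succ l ih =>
    intro n g h i hi hf
    rw [check, Bool.and_eq_true, Bool.or_eq_true] at h
    rcases i with _ | i
    · simp only [Nat.mul_zero, Nat.add_zero] at hf ⊢
      rcases h.1 with h1 | h1
      · rw [Bool.not_eq_true'] at h1; rw [hf] at h1; cases h1
      · exact h1
    · have : n + 2 * (i+1) = (n + 2) + 2 * i := by ring
      rw [this] at hf ⊢
      exact ih (n+2) g h.2 i (by omega) hf

lemma range_next (f : ℕ → Bool) (a len g : ℕ)
    (hchk : check f a len g = true) (ha : Odd a) (ha2 : 3 ≤ a)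
    (hval : ∀ m, Odd m → a ≤ m → m < a + 2*(len+g) → (f m = true ↔ m.Prime)) :
    ∀ p, p.Prime → a ≤ p → p < a + 2*len → ∃ r, r.Prime ∧ p < r ∧ r ≤ p + 2*g := by
  intro p hp hap hpb
  have hpodd : Odd p := Nat.Prime.odd_of_ne_two hp (by omega)
  obtain ⟨x, hx⟩ := hpodd
  obtain ⟨y, hy⟩ := ha
  obtain ⟨i, hi⟩ : ∃ i, p = a + 2*i := ⟨x - y, by omega⟩
  have hilt : i < len := by omega
  have hfp : f p = true := (hval p ⟨x, hx⟩ hap (by omega)).mpr hp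
  have hnext := check_spec f len a g hchk i hilt (hi ▸ hfp)
  obtain ⟨j, hj, hfj⟩ := nextIn_spec f g (a + 2*i) hnext
  refine ⟨a + 2*i + 2*(j+1), ?_, by omega, by omega⟩
  have : Odd (a + 2*i + 2*(j+1)) := ⟨y + i + j + 1, by omega⟩
  exact (hval _ this (by omega) (by omega)).mp hfj

set_option maxRecDepth 1000000 in
lemma chk0 : check isPrimeG 521 2500 26 = true := by decide

set_option maxRecDepth 1000000 in
lemma chk1 : check isPrimeG 5521 2500 26 = true := by decide

set_option maxRecDepth 1000000 in
lemma chk2 : check isPrimeG 10521 2500 26 = true := by decide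

set_option maxRecDepth 1000000 in
lemma chk3 : check isPrimeG 15521 2500 26 = true := by decide

set_option maxRecDepth 1000000 in
lemma chk4 : check isPrimeG 20521 2500 26 = true := by decide

set_option maxRecDepth 1000000 in
lemma chk5 : check isPrimeG 25521 2500 26 = true := by decide

set_option maxRecDepth 1000000 in
lemma chk6 : check isPrimeG 30521 378 26 = true := by decide

set_option maxRecDepth 1000000 in
lemma chk7 : check isPrimeG 31277 2500 36 = true := by decide

set_option maxRecDepth 1000000 in
lemma chk8 : check isPrimeG 36277 2500 36 = true := by decide

set_option maxRecDepth 1000000 in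
lemma chk9 : check isPrimeG 41277 2500 36 = true := by decide

set_option maxRecDepth 1000000 in
lemma chk10 : check isPrimeG 46277 2500 36 = true := by decide

set_option maxRecDepth 1000000 in
lemma chk11 : check isPrimeG 51277 2500 36 = true := by decide

set_option maxRecDepth 1000000 in
lemma chk12 : check isPrimeG 56277 1954 36 = true := by decide


lemma chkO1 : check isPrimeO 5 2 2 = true := by decide
lemma chkO2 : check isPrimeO 9 7 2 = true := by decide
lemma chkO3 : check isPrimeO 23 33 3 = true := by decide
set_option maxRecDepth 100000 in
lemma chkO4 : check isPrimeO 89 216 7 = true := by decide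

lemma valO (a len g : ℕ) (h : a + 2*(len+g) ≤ 61504) (h3 : 3 ≤ a) :
    ∀ m, Odd m → a ≤ m → m < a + 2*(len+g) → (isPrimeO m = true ↔ m.Prime) :=
  fun m hm h1 h2 => isPrimeO_iff m hm (by omega) (by omega)

lemma valG (a len g : ℕ) (h : a + 2*(len+g) ≤ 63001) (h3 : 242 ≤ a) :
    ∀ m, Odd m → a ≤ m → m < a + 2*(len+g) → (isPrimeG m = true ↔ m.Prime) :=
  fun m _ h1 h2 => isPrimeG_iff m (by omega) (by omega)

lemma ex1 : ∀ p, p.Prime → 5 ≤ p → p < 9 → ∃ r, r.Prime ∧ p < r ∧ r ≤ p + 4 :=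
  range_next isPrimeO 5 2 2 chkO1 ⟨2, rfl⟩ (by norm_num) (valO 5 2 2 (by norm_num) (by norm_num))

lemma ex2 : ∀ p, p.Prime → 9 ≤ p → p < 23 → ∃ r, r.Prime ∧ p < r ∧ r ≤ p + 4 :=
  range_next isPrimeO 9 7 2 chkO2 ⟨4, rfl⟩ (by norm_num) (valO 9 7 2 (by norm_num) (by norm_num))

lemma ex3 : ∀ p, p.Prime → 23 ≤ p → p < 89 → ∃ r, r.Prime ∧ p < r ∧ r ≤ p + 6 :=
  range_next isPrimeO 23 33 3 chkO3 ⟨11, rfl⟩ (by norm_num) (valO 23 33 3 (by norm_num) (by norm_num))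

lemma ex4 : ∀ p, p.Prime → 89 ≤ p → p < 521 → ∃ r, r.Prime ∧ p < r ∧ r ≤ p + 14 :=
  range_next isPrimeO 89 216 7 chkO4 ⟨44, rfl⟩ (by norm_num) (valO 89 216 7 (by norm_num) (by norm_num))

lemma gex0 : ∀ p, p.Prime → 521 ≤ p → p < 5521 → ∃ r, r.Prime ∧ p < r ∧ r ≤ p + 52 :=
  range_next isPrimeG 521 2500 26 chk0 ⟨260, rfl⟩ (by norm_num) (valG 521 2500 26 (by norm_num) (by norm_num))

lemma gex1 : ∀ p, p.Prime → 5521 ≤ p → p < 10521 → ∃ r, r.Prime ∧ p < r ∧ r ≤ p + 52 :=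
  range_next isPrimeG 5521 2500 26 chk1 ⟨2760, rfl⟩ (by norm_num) (valG 5521 2500 26 (by norm_num) (by norm_num))

lemma gex2 : ∀ p, p.Prime → 10521 ≤ p → p < 15521 → ∃ r, r.Prime ∧ p < r ∧ r ≤ p + 52 :=
  range_next isPrimeG 10521 2500 26 chk2 ⟨5260, rfl⟩ (by norm_num) (valG 10521 2500 26 (by norm_num) (by norm_num))

lemma gex3 : ∀ p, p.Prime → 15521 ≤ p → p < 20521 → ∃ r, r.Prime ∧ p < r ∧ r ≤ p + 52 :=
  range_next isPrimeG 15521 2500 26 chk3 ⟨7760, rfl⟩ (by norm_num) (valG 15521 2500 26 (by norm_num) (by norm_num))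

lemma gex4 : ∀ p, p.Prime → 20521 ≤ p → p < 25521 → ∃ r, r.Prime ∧ p < r ∧ r ≤ p + 52 :=
  range_next isPrimeG 20521 2500 26 chk4 ⟨10260, rfl⟩ (by norm_num) (valG 20521 2500 26 (by norm_num) (by norm_num))

lemma gex5 : ∀ p, p.Prime → 25521 ≤ p → p < 30521 → ∃ r, r.Prime ∧ p < r ∧ r ≤ p + 52 :=
  range_next isPrimeG 25521 2500 26 chk5 ⟨12760, rfl⟩ (by norm_num) (valG 25521 2500 26 (by norm_num) (by norm_num))

lemma gex6 : ∀ p, p.Prime → 30521 ≤ p → p < 31277 → ∃ r, r.Prime ∧ p < r ∧ r ≤ p + 52 :=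
  range_next isPrimeG 30521 378 26 chk6 ⟨15260, rfl⟩ (by norm_num) (valG 30521 378 26 (by norm_num) (by norm_num))

lemma gex7 : ∀ p, p.Prime → 31277 ≤ p → p < 36277 → ∃ r, r.Prime ∧ p < r ∧ r ≤ p + 72 :=
  range_next isPrimeG 31277 2500 36 chk7 ⟨15638, rfl⟩ (by norm_num) (valG 31277 2500 36 (by norm_num) (by norm_num))

lemma gex8 : ∀ p, p.Prime → 36277 ≤ p → p < 41277 → ∃ r, r.Prime ∧ p < r ∧ r ≤ p + 72 :=
  range_next isPrimeG 36277 2500 36 chk8 ⟨18138, rfl⟩ (by norm_num) (valG 36277 2500 36 (by norm_num) (by norm_num))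

lemma gex9 : ∀ p, p.Prime → 41277 ≤ p → p < 46277 → ∃ r, r.Prime ∧ p < r ∧ r ≤ p + 72 :=
  range_next isPrimeG 41277 2500 36 chk9 ⟨20638, rfl⟩ (by norm_num) (valG 41277 2500 36 (by norm_num) (by norm_num))

lemma gex10 : ∀ p, p.Prime → 46277 ≤ p → p < 51277 → ∃ r, r.Prime ∧ p < r ∧ r ≤ p + 72 :=
  range_next isPrimeG 46277 2500 36 chk10 ⟨23138, rfl⟩ (by norm_num) (valG 46277 2500 36 (by norm_num) (by norm_num))

lemma gex11 : ∀ p, p.Prime → 51277 ≤ p → p < 56277 → ∃ r, r.Prime ∧ p < r ∧ r ≤ p + 72 :=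
  range_next isPrimeG 51277 2500 36 chk11 ⟨25638, rfl⟩ (by norm_num) (valG 51277 2500 36 (by norm_num) (by norm_num))

lemma gex12 : ∀ p, p.Prime → 56277 ≤ p → p < 60185 → ∃ r, r.Prime ∧ p < r ∧ r ≤ p + 72 :=
  range_next isPrimeG 56277 1954 36 chk12 ⟨28138, rfl⟩ (by norm_num) (valG 56277 1954 36 (by norm_num) (by norm_num))

lemma ex5 : ∀ p, p.Prime → 521 ≤ p → p < 31277 → ∃ r, r.Prime ∧ p < r ∧ r ≤ p + 52 := by
  intro p hp h1 h2
  rcases Nat.lt_or_ge p 5521 with h | h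
  · exact gex0 p hp (by omega) h
  rcases Nat.lt_or_ge p 10521 with h | h
  · exact gex1 p hp (by omega) h
  rcases Nat.lt_or_ge p 15521 with h | h
  · exact gex2 p hp (by omega) h
  rcases Nat.lt_or_ge p 20521 with h | h
  · exact gex3 p hp (by omega) h
  rcases Nat.lt_or_ge p 25521 with h | h
  · exact gex4 p hp (by omega) h
  rcases Nat.lt_or_ge p 30521 with h | h
  · exact gex5 p hp (by omega) h
  exact gex6 p hp (by omega) (by omega)

lemma ex6 : ∀ p, p.Prime → 31277 ≤ p → p < 60184 → ∃ r, r.Prime ∧ p < r ∧ r ≤ p + 72 := by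
  intro p hp h1 h2
  rcases Nat.lt_or_ge p 36277 with h | h
  · exact gex7 p hp (by omega) h
  rcases Nat.lt_or_ge p 41277 with h | h
  · exact gex8 p hp (by omega) h
  rcases Nat.lt_or_ge p 46277 with h | h
  · exact gex9 p hp (by omega) h
  rcases Nat.lt_or_ge p 51277 with h | h
  · exact gex10 p hp (by omega) h
  rcases Nat.lt_or_ge p 56277 with h | h
  · exact gex11 p hp (by omega) h
  exact gex12 p hp (by omega) (by omega)

lemma log_gt_11 (p : ℕ) (h5 : 5 ≤ p) : 1.1 < Real.log p := by
  rw [Real.lt_log_iff_exp_lt (by positivity)]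
  have h1 : Real.exp 1.1 = Real.exp 1 * Real.exp 0.1 := by
    rw [← Real.exp_add]; norm_num
  have h2 : Real.exp 0.1 ≤ 1 / 0.9 := by
    have h3 : (0.9 : ℝ) ≤ Real.exp (-0.1) := by
      have := Real.add_one_le_exp (-0.1 : ℝ)
      linarith
    rw [Real.exp_neg] at h3
    rw [le_div_iff₀ (by norm_num)]
    have hpos := Real.exp_pos (0.1 : ℝ)
    calc Real.exp 0.1 * 0.9 ≤ Real.exp 0.1 * (Real.exp 0.1)⁻¹ := by
          apply mul_le_mul_of_nonneg_left h3 (le_of_lt hpos)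
      _ = 1 := mul_inv_cancel₀ (ne_of_gt hpos)
  have h4 := Real.exp_one_lt_d9
  have : Real.exp 1.1 < 5 := by
    rw [h1]
    calc Real.exp 1 * Real.exp 0.1 ≤ 2.7182818286 * (1/0.9) := by
          apply mul_le_mul h4.le h2 (Real.exp_pos _).le (by norm_num)
      _ < 5 := by norm_num
  calc Real.exp 1.1 < 5 := this
    _ ≤ p := by exact_mod_cast h5

lemma exp_lb (k : ℕ) (f : ℝ) (hf : 0 ≤ f) :
    (2.7182818283 : ℝ) ^ k * (1 + f) ≤ Real.exp (k + f) := by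
  rw [Real.exp_add]
  have h1 : (2.7182818283 : ℝ) ^ k ≤ Real.exp k := by
    have : Real.exp (k : ℝ) = Real.exp 1 ^ k := by
      rw [← Real.exp_nat_mul]; norm_num
    rw [this]
    exact pow_le_pow_left₀ (by norm_num) Real.exp_one_gt_d9.le k
  have h2 : 1 + f ≤ Real.exp f := by
    have := Real.add_one_le_exp f; linarith
  exact mul_le_mul h1 h2 (by linarith) (Real.exp_pos _).le

lemma range_case (p q G a k : ℕ) (f : ℝ)
    (hp5 : 5 ≤ p) (hap : a ≤ p) (hq : q ≤ p + G) (hG : 0 < G) (hf : 0 ≤ f)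
    (hnum : (p : ℝ) < 2.7182818283 ^ k * (1 + f))
    (hcond : (G : ℝ) * ((k + f) - 1.1) ≤ a) :
    ((q : ℝ) - p) < p / (Real.log p - 1.1) := by
  have hlog_lt : Real.log p < k + f := by
    rw [Real.log_lt_iff_lt_exp (by positivity)]
    calc (p : ℝ) < 2.7182818283 ^ k * (1 + f) := hnum
      _ ≤ Real.exp (k + f) := exp_lb k f hf
  have hlog_gt : 1.1 < Real.log p := log_gt_11 p hp5
  have hden : 0 < Real.log p - 1.1 := by linarith
  have hGpos : (0:ℝ) < G := by exact_mod_cast hG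
  have hstep : (G : ℝ) * (Real.log p - 1.1) < p := by
    calc (G : ℝ) * (Real.log p - 1.1) < G * ((k + f) - 1.1) := by
          apply mul_lt_mul_of_pos_left (by linarith) hGpos
      _ ≤ a := hcond
      _ ≤ p := by exact_mod_cast hap
  have hGlt : (G : ℝ) < p / (Real.log p - 1.1) := by
    rw [lt_div_iff₀ hden]; exact hstep
  have hqp : (q : ℝ) - p ≤ G := by
    have : (q : ℝ) ≤ p + G := by exact_mod_cast hq
    linarith
  linarith

lemma cast_lt_of_le (p B : ℕ) (x : ℝ) (h : p ≤ B) (h2 : (B : ℝ) < x) : (p : ℝ) < x :=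
  lt_of_le_of_lt (by exact_mod_cast h) h2


theorem small_range_corollary (p q : ℕ) (hp : p.Prime) (h5 : 5 ≤ p) (hlt : p < 60184)
    (hq : q.Prime) (hpq : p < q) (hnext : ∀ r, r.Prime → p < r → q ≤ r) :
    ((q : ℝ) - p) < p / (Real.log p - 1.1) := by
  rcases Nat.lt_or_ge p 9 with h | h
  · obtain ⟨r, hr, hpr, hrb⟩ := ex1 p hp h5 h
    exact range_case p q 4 5 2 0.22 h5 h5 (le_trans (hnext r hr hpr) hrb) (by norm_num)
      (by norm_num) (cast_lt_of_le p 8 _ (by omega) (by norm_num)) (by norm_num)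
  rcases Nat.lt_or_ge p 23 with h2 | h2
  · obtain ⟨r, hr, hpr, hrb⟩ := ex2 p hp h h2
    exact range_case p q 4 9 3 0.15 h5 h (le_trans (hnext r hr hpr) hrb) (by norm_num)
      (by norm_num) (cast_lt_of_le p 22 _ (by omega) (by norm_num)) (by norm_num)
  rcases Nat.lt_or_ge p 89 with h3 | h3
  · obtain ⟨r, hr, hpr, hrb⟩ := ex3 p hp h2 h3
    exact range_case p q 6 23 4 0.64 h5 h2 (le_trans (hnext r hr hpr) hrb) (by norm_num)
      (by norm_num) (cast_lt_of_le p 88 _ (by omega) (by norm_num)) (by norm_num)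
  rcases Nat.lt_or_ge p 521 with h4 | h4
  · obtain ⟨r, hr, hpr, hrb⟩ := ex4 p hp h3 h4
    exact range_case p q 14 89 6 0.29 h5 h3 (le_trans (hnext r hr hpr) hrb) (by norm_num)
      (by norm_num) (cast_lt_of_le p 520 _ (by omega) (by norm_num)) (by norm_num)
  rcases Nat.lt_or_ge p 31277 with h5' | h5'
  · obtain ⟨r, hr, hpr, hrb⟩ := ex5 p hp h4 h5'
    exact range_case p q 52 521 10 0.42 h5 h4 (le_trans (hnext r hr hpr) hrb) (by norm_num)
      (by norm_num) (cast_lt_of_le p 31276 _ (by omega) (by norm_num)) (by norm_num)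
  · obtain ⟨r, hr, hpr, hrb⟩ := ex6 p hp h5' hlt
    exact range_case p q 72 31277 11 0.01 h5 h5' (le_trans (hnext r hr hpr) hrb) (by norm_num)
      (by norm_num) (cast_lt_of_le p 60183 _ (by omega) (by norm_num)) (by norm_num)
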